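/- Let M, K⁰, K₁, …, K_I be real symmetric d×d matrices with M positive definite, and set K(α) = K⁰ − Σ_{i=1}^{I} α_i·K_i. Fix α₀ ∈ ℝ^I and suppose there exist vectors φ₁(α₀), …, φ_d(α₀) ∈ ℝ^d and pairwise distinct real numbers λ₁(α₀), …, λ_d(α₀) with K(α₀)φ_q(α₀) = λ_q(α₀)·M·φ_q(α₀) and φ_q(α₀)ᵀMφ_p(α₀) = δ_{qp} for all q, p. Suppose further that for some fixed j, differentiable maps α ↦ λ_j(α) ∈ ℝ and α ↦ φ_j(α) ∈ ℝ^d defined near α₀ satisfy K(α)φ_j(α) = λ_j(α)Mφ_j(α) and φ_j(α)ᵀMφ_j(α) = 1. Then ∂φ_j/∂α_i (α₀) = Σ_{q ≠ j} [ φ_q(α₀)ᵀ·K_i·φ_j(α₀) / (λ_q(α₀) − λ_j(α₀)) ] · φ_q(α₀). -/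

import Mathlib

open Matrix

/-- Dot product with a fixed vector as a continuous linear map. -/
noncomputable def dotCLM {d : ℕ} (w : Fin d → ℝ) : (Fin d → ℝ) →L[ℝ] ℝ :=
  LinearMap.toContinuousLinearMap
    { toFun := fun u => w ⬝ᵥ u
      map_add' := fun a b => dotProduct_add w a b
      map_smul' := fun c a => by simp [dotProduct_smul, smul_eq_mul] }

@[simp] lemma dotCLM_apply {d : ℕ} (w u : Fin d → ℝ) : dotCLM w u = w ⬝ᵥ u := rfl

/-- `mulVec` by a fixed matrix as a continuous linear map. -/
noncomputable def mulVecCLM {d : ℕ} (A : Matrix (Fin d) (Fin d) ℝ) :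
    (Fin d → ℝ) →L[ℝ] (Fin d → ℝ) :=
  LinearMap.toContinuousLinearMap A.mulVecLin

@[simp] lemma mulVecCLM_apply {d : ℕ} (A : Matrix (Fin d) (Fin d) ℝ) (u : Fin d → ℝ) :
    mulVecCLM A u = A *ᵥ u := rfl

/-- Product rule for the dot product of two vector-valued maps. -/
lemma HasFDerivAt.dotProd {E : Type*} [NormedAddCommGroup E] [NormedSpace ℝ E] {d : ℕ}
    {f g : E → (Fin d → ℝ)} {Df Dg : E →L[ℝ] (Fin d → ℝ)} {x : E}
    (hf : HasFDerivAt f Df x) (hg : HasFDerivAt g Dg x) :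
    HasFDerivAt (fun y => f y ⬝ᵥ g y)
      (∑ r, (f x r • ((ContinuousLinearMap.proj r).comp Dg)
           + g x r • ((ContinuousLinearMap.proj r).comp Df))) x := by
  have h : ∀ r : Fin d, HasFDerivAt (fun y => f y r * g y r)
      (f x r • ((ContinuousLinearMap.proj r).comp Dg)
        + g x r • ((ContinuousLinearMap.proj r).comp Df)) x := by
    intro r
    have hfr : HasFDerivAt (fun y => f y r) ((ContinuousLinearMap.proj r).comp Df) x :=
      (ContinuousLinearMap.proj r (R := ℝ) (φ := fun _ : Fin d => ℝ)).hasFDerivAt.comp x hf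
    have hgr : HasFDerivAt (fun y => g y r) ((ContinuousLinearMap.proj r).comp Dg) x :=
      (ContinuousLinearMap.proj r (R := ℝ) (φ := fun _ : Fin d => ℝ)).hasFDerivAt.comp x hg
    exact hfr.mul hgr
  have := HasFDerivAt.fun_sum (fun r (_ : r ∈ Finset.univ) => h r)
  simpa [dotProduct] using this

lemma sum_smul_mulVec {d k : ℕ} (c : Fin k → ℝ)
    (A : Fin k → Matrix (Fin d) (Fin d) ℝ) (u : Fin d → ℝ) :
    (∑ i, c i • A i) *ᵥ u = ∑ i, c i • (A i *ᵥ u) := by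
  funext r
  simp only [Matrix.mulVec, dotProduct, Matrix.sum_apply, Matrix.smul_apply, smul_eq_mul,
    Finset.sum_mul, Finset.sum_apply, Pi.smul_apply, Finset.mul_sum]
  rw [Finset.sum_comm]
  exact Finset.sum_congr rfl fun i _ => Finset.sum_congr rfl fun s _ => by ring

lemma dot_sum_smul_mulVec {d k : ℕ} (w : Fin d → ℝ) (c : Fin k → ℝ)
    (A : Fin k → Matrix (Fin d) (Fin d) ℝ) (u : Fin d → ℝ) :
    w ⬝ᵥ ((∑ i, c i • A i) *ᵥ u) = ∑ i, c i * (w ⬝ᵥ (A i *ᵥ u)) := by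
  rw [sum_smul_mulVec]
  simp only [dotProduct, Finset.sum_apply, Pi.smul_apply, smul_eq_mul, Finset.mul_sum]
  rw [Finset.sum_comm]
  exact Finset.sum_congr rfl fun i _ => Finset.sum_congr rfl fun r _ => by ring

lemma basis_expand {d : ℕ} (M : Matrix (Fin d) (Fin d) ℝ) (hM : M.IsSymm)
    (φs : Fin d → (Fin d → ℝ))
    (horth : ∀ q p, φs q ⬝ᵥ M.mulVec (φs p) = if q = p then (1:ℝ) else 0)
    (u : Fin d → ℝ) : u = ∑ q, (φs q ⬝ᵥ M.mulVec u) • φs q := by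
  classical
  set Φ : Matrix (Fin d) (Fin d) ℝ := Matrix.of fun r q => φs q r with hΦ
  have h1 : Φᵀ * (M * Φ) = 1 := by
    ext q p
    have := horth q p
    simpa [Matrix.mul_apply, Matrix.one_apply, dotProduct, Matrix.mulVec, hΦ,
      Finset.mul_sum, mul_assoc] using this
  have h2 : (M * Φ) * Φᵀ = 1 := mul_eq_one_comm.mp h1
  have h3 : Φ * Φᵀ * M = 1 := by
    have := congrArg Matrix.transpose h2
    simpa [Matrix.transpose_mul, Matrix.mul_assoc, hM.eq] using this
  have h4 : (Φ * Φᵀ * M) *ᵥ u = u := by rw [h3, Matrix.one_mulVec]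
  have h5 : ∑ q, (φs q ⬝ᵥ M.mulVec u) • φs q = (Φ * Φᵀ * M) *ᵥ u := by
    funext r
    rw [Matrix.mul_assoc, ← Matrix.mulVec_mulVec, ← Matrix.mulVec_mulVec]
    simp only [Finset.sum_apply, Pi.smul_apply, smul_eq_mul, Matrix.mulVec, dotProduct,
      hΦ, Matrix.of_apply, Matrix.transpose_apply]
    exact Finset.sum_congr rfl fun q _ => mul_comm _ _
  rw [h5, h4]

/-- Fox–Kapoor eigenvector sensitivity for the stiffness parametrization
`K(α) = K⁰ − Σ_i α_i K_i`:
`∂φ_j/∂α_i = Σ_{q ≠ j} (φ_qᵀ K_i φ_j / (λ_q − λ_j)) φ_q`. -/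
theorem fox_kapoor_eigenvector_sensitivity
    (d I : ℕ) (M K0 : Matrix (Fin d) (Fin d) ℝ) (Kmat : Fin I → Matrix (Fin d) (Fin d) ℝ)
    (hM : M.IsSymm) (hMpd : M.PosDef) (hK0 : K0.IsSymm) (hKmat : ∀ i, (Kmat i).IsSymm)
    (K : (Fin I → ℝ) → Matrix (Fin d) (Fin d) ℝ)
    (hK : ∀ α, K α = K0 - ∑ i, α i • Kmat i)
    (α₀ : Fin I → ℝ)
    -- eigenpairs at `α₀`, with pairwise distinct eigenvalues
    (φs : Fin d → (Fin d → ℝ)) (lam : Fin d → ℝ)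
    (hdistinct : ∀ q p, q ≠ p → lam q ≠ lam p)
    (heig0 : ∀ q, (K α₀).mulVec (φs q) = lam q • M.mulVec (φs q))
    (horth : ∀ q p, φs q ⬝ᵥ M.mulVec (φs p) = if q = p then (1 : ℝ) else 0)
    -- a fixed mode `j` and differentiable eigenvalue/eigenvector maps near `α₀`
    (j : Fin d) (lamj : (Fin I → ℝ) → ℝ) (φj : (Fin I → ℝ) → (Fin d → ℝ))
    (hdiff : ∀ᶠ α in nhds α₀, DifferentiableAt ℝ lamj α ∧ DifferentiableAt ℝ φj α)
    (heig : ∀ᶠ α in nhds α₀, (K α).mulVec (φj α) = lamj α • M.mulVec (φj α))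
    (hnorm : ∀ᶠ α in nhds α₀, φj α ⬝ᵥ M.mulVec (φj α) = 1)
    (hlamj0 : lamj α₀ = lam j) (hφj0 : φj α₀ = φs j) :
    ∀ i, fderiv ℝ φj α₀ (Pi.single i 1) =
      ∑ q ∈ Finset.univ.erase j,
        ((φs q ⬝ᵥ (Kmat i).mulVec (φs j)) / (lam q - lam j)) • φs q := by
  classical
  intro i
  obtain ⟨hl, hφ⟩ := hdiff.self_of_nhds
  set D : (Fin I → ℝ) →L[ℝ] (Fin d → ℝ) := fderiv ℝ φj α₀ with hDdef
  set Dl : (Fin I → ℝ) →L[ℝ] ℝ := fderiv ℝ lamj α₀ with hDldef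
  have hfj : HasFDerivAt φj D α₀ := hφ.hasFDerivAt
  have hlj : HasFDerivAt lamj Dl α₀ := hl.hasFDerivAt
  set e : Fin I → ℝ := Pi.single i 1 with he
  set v : Fin d → ℝ := D e with hv
  set μ : ℝ := Dl e with hμ
  -- symmetry helper
  have hsym : ∀ (A : Matrix (Fin d) (Fin d) ℝ), A.IsSymm →
      ∀ a b : Fin d → ℝ, a ⬝ᵥ A *ᵥ b = (A *ᵥ a) ⬝ᵥ b := by
    intro A hA a b
    rw [Matrix.dotProduct_mulVec, ← Matrix.mulVec_transpose, hA.eq]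
  have hKsym : (K α₀).IsSymm := by
    rw [hK]
    refine hK0.sub ?_
    unfold Matrix.IsSymm
    rw [Matrix.transpose_sum]
    exact Finset.sum_congr rfl fun i' _ => ((hKmat i').smul (α₀ i')).eq
  -- dotting the eigen-equation at α₀
  have hKq : ∀ q (b : Fin d → ℝ), φs q ⬝ᵥ (K α₀) *ᵥ b = lam q * (φs q ⬝ᵥ M *ᵥ b) := by
    intro q b
    rw [hsym _ hKsym, heig0 q, smul_dotProduct, smul_eq_mul, ← hsym M hM]
  -- key scalar equation from differentiating the eigen-equation
  have key : ∀ q : Fin d,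
      lam q * (φs q ⬝ᵥ M *ᵥ v) - (φs q ⬝ᵥ (Kmat i) *ᵥ φs j)
        - μ * (if q = j then 1 else 0) - lam j * (φs q ⬝ᵥ M *ᵥ v) = 0 := by
    intro q
    set w : Fin d → ℝ := φs q with hw
    have h0 : HasFDerivAt (fun α => w ⬝ᵥ K0 *ᵥ φj α)
        (((dotCLM w).comp (mulVecCLM K0)).comp D) α₀ :=
      ((dotCLM w).comp (mulVecCLM K0)).hasFDerivAt.comp α₀ hfj
    have hKi : ∀ i' : Fin I, HasFDerivAt (fun α => w ⬝ᵥ (Kmat i') *ᵥ φj α)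
        (((dotCLM w).comp (mulVecCLM (Kmat i'))).comp D) α₀ := fun i' =>
      ((dotCLM w).comp (mulVecCLM (Kmat i'))).hasFDerivAt.comp α₀ hfj
    have hMt : HasFDerivAt (fun α => w ⬝ᵥ M *ᵥ φj α)
        (((dotCLM w).comp (mulVecCLM M)).comp D) α₀ :=
      ((dotCLM w).comp (mulVecCLM M)).hasFDerivAt.comp α₀ hfj
    have hproj : ∀ i' : Fin I, HasFDerivAt (fun α : Fin I → ℝ => α i')
        (ContinuousLinearMap.proj (R := ℝ) (φ := fun _ : Fin I => ℝ) i') α₀ := fun i' =>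
      (ContinuousLinearMap.proj (R := ℝ) (φ := fun _ : Fin I => ℝ) i').hasFDerivAt
    have hprod : ∀ i' : Fin I, HasFDerivAt
        (fun α => α i' * (w ⬝ᵥ (Kmat i') *ᵥ φj α))
        (α₀ i' • (((dotCLM w).comp (mulVecCLM (Kmat i'))).comp D)
          + (w ⬝ᵥ (Kmat i') *ᵥ φj α₀) • ContinuousLinearMap.proj (R := ℝ) (φ := fun _ : Fin I => ℝ) i') α₀ := fun i' =>
      (hproj i').mul (hKi i')
    have hsumt : HasFDerivAt (fun α => ∑ i', α i' * (w ⬝ᵥ (Kmat i') *ᵥ φj α))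
        (∑ i', (α₀ i' • (((dotCLM w).comp (mulVecCLM (Kmat i'))).comp D)
          + (w ⬝ᵥ (Kmat i') *ᵥ φj α₀) • ContinuousLinearMap.proj (R := ℝ) (φ := fun _ : Fin I => ℝ) i')) α₀ :=
      HasFDerivAt.fun_sum fun i' _ => hprod i'
    have hlam : HasFDerivAt (fun α => lamj α * (w ⬝ᵥ M *ᵥ φj α))
        (lamj α₀ • (((dotCLM w).comp (mulVecCLM M)).comp D)
          + (w ⬝ᵥ M *ᵥ φj α₀) • Dl) α₀ := hlj.mul hMt
    have hFder := (h0.sub hsumt).sub hlam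
    have hF0 : (fun α => (w ⬝ᵥ K0 *ᵥ φj α - ∑ i', α i' * (w ⬝ᵥ (Kmat i') *ᵥ φj α))
        - lamj α * (w ⬝ᵥ M *ᵥ φj α)) =ᶠ[nhds α₀] fun _ => (0:ℝ) := by
      filter_upwards [heig] with α hα
      have hdot : w ⬝ᵥ (K α) *ᵥ φj α = lamj α * (w ⬝ᵥ M *ᵥ φj α) := by
        rw [hα, dotProduct_smul, smul_eq_mul]
      have hexp : w ⬝ᵥ (K α) *ᵥ φj α
          = w ⬝ᵥ K0 *ᵥ φj α - ∑ i', α i' * (w ⬝ᵥ (Kmat i') *ᵥ φj α) := by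
        rw [hK, Matrix.sub_mulVec, dotProduct_sub, dot_sum_smul_mulVec]
      rw [← hexp, hdot, sub_self]
    have hzero : (((dotCLM w).comp (mulVecCLM K0)).comp D
        - ∑ i', (α₀ i' • (((dotCLM w).comp (mulVecCLM (Kmat i'))).comp D)
          + (w ⬝ᵥ (Kmat i') *ᵥ φj α₀) • ContinuousLinearMap.proj (R := ℝ) (φ := fun _ : Fin I => ℝ) i'))
        - (lamj α₀ • (((dotCLM w).comp (mulVecCLM M)).comp D)
          + (w ⬝ᵥ M *ᵥ φj α₀) • Dl) = 0 := by
      rw [← hFder.fderiv]; refine hF0.fderiv_eq.trans ?_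
      simp
    have heval := DFunLike.congr_fun hzero e
    simp only [ContinuousLinearMap.sub_apply, ContinuousLinearMap.add_apply,
      ContinuousLinearMap.coe_sum', Finset.sum_apply, ContinuousLinearMap.coe_smul',
      Pi.smul_apply, ContinuousLinearMap.coe_comp', Function.comp_apply,
      ContinuousLinearMap.proj_apply, dotCLM_apply, mulVecCLM_apply, smul_eq_mul,
      ContinuousLinearMap.zero_apply] at heval
    -- heval :
    --   w ⬝ᵥ K0 *ᵥ D e - ∑ i', (α₀ i' * (w ⬝ᵥ Kmat i' *ᵥ D e)
    --      + (w ⬝ᵥ Kmat i' *ᵥ φj α₀) * e i')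
    --   - (lamj α₀ * (w ⬝ᵥ M *ᵥ D e) + (w ⬝ᵥ M *ᵥ φj α₀) * Dl e) = 0
    have hsingle : ∀ (f : Fin I → ℝ), ∑ i', f i' * e i' = f i := by
      intro f
      rw [he]
      simp [Pi.single_apply, mul_ite, Finset.sum_ite_eq']
    rw [Finset.sum_add_distrib, hsingle] at heval
    have hcomb : φs q ⬝ᵥ K0 *ᵥ v - ∑ i', α₀ i' * (φs q ⬝ᵥ (Kmat i') *ᵥ v)
        = lam q * (φs q ⬝ᵥ M *ᵥ v) := by
      rw [← hKq q v]
      rw [hK, Matrix.sub_mulVec, dotProduct_sub, dot_sum_smul_mulVec]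
    rw [hφj0, hlamj0, horth q j] at heval
    rw [← hv, ← hμ] at heval
    simp only [hw] at heval ⊢
    by_cases hqj : q = j
    · simp only [if_pos hqj] at heval ⊢
      linarith
    · simp only [if_neg hqj] at heval ⊢
      linarith
  -- coefficient along φ_j vanishes (from the normalization)
  have hcj : φs j ⬝ᵥ M *ᵥ v = 0 := by
    have hMφ : HasFDerivAt (fun α => M *ᵥ φj α) ((mulVecCLM M).comp D) α₀ :=
      (mulVecCLM M).hasFDerivAt.comp α₀ hfj
    have hN := hfj.dotProd hMφ
    have hN0 : (fun α => φj α ⬝ᵥ M *ᵥ φj α) =ᶠ[nhds α₀] fun _ => (1:ℝ) := hnorm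
    have hzero : (∑ r, (φj α₀ r • ((ContinuousLinearMap.proj r).comp ((mulVecCLM M).comp D))
        + (M *ᵥ φj α₀) r • ((ContinuousLinearMap.proj r).comp D))) = 0 := by
      rw [← hN.fderiv, hN0.fderiv_eq]
      simp
    have heval := DFunLike.congr_fun hzero e
    simp only [ContinuousLinearMap.coe_sum', Finset.sum_apply,
      ContinuousLinearMap.add_apply, ContinuousLinearMap.coe_smul', Pi.smul_apply,
      ContinuousLinearMap.coe_comp', Function.comp_apply, ContinuousLinearMap.proj_apply,
      mulVecCLM_apply, smul_eq_mul, ContinuousLinearMap.zero_apply] at heval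
    -- heval : ∑ r, (φj α₀ r * (M *ᵥ D e) r + (M *ᵥ φj α₀) r * (D e) r) = 0
    rw [Finset.sum_add_distrib] at heval
    have h1 : ∑ r, φj α₀ r * (M *ᵥ (D e)) r = φs j ⬝ᵥ M *ᵥ v := by
      rw [hφj0]; rfl
    have h2 : ∑ r, (M *ᵥ φj α₀) r * (D e) r = φs j ⬝ᵥ M *ᵥ v := by
      rw [hφj0, show ∑ r, (M *ᵥ φs j) r * (D e) r = (M *ᵥ φs j) ⬝ᵥ (D e) from rfl,
        ← hsym M hM]
    rw [h1, h2] at heval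
    linarith
  -- coefficients along φ_q, q ≠ j
  have hcq : ∀ q : Fin d, q ≠ j →
      φs q ⬝ᵥ M *ᵥ v = (φs q ⬝ᵥ (Kmat i) *ᵥ φs j) / (lam q - lam j) := by
    intro q hq
    have hk := key q
    rw [if_neg hq] at hk
    have hne : lam q - lam j ≠ 0 := sub_ne_zero.mpr (hdistinct q j hq)
    field_simp
    linarith [hk]
  -- assemble
  have hvexp := basis_expand M hM φs horth v
  have : v = ∑ q ∈ Finset.univ.erase j,
      ((φs q ⬝ᵥ (Kmat i) *ᵥ φs j) / (lam q - lam j)) • φs q := by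
    rw [hvexp, ← Finset.add_sum_erase _ _ (Finset.mem_univ j), hcj, zero_smul, zero_add]
    exact Finset.sum_congr rfl fun q hq => by
      rw [hcq q (Finset.mem_erase.mp hq).1]
  exact this
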